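/- If A ∈ M_n(ℂ) is a matrix whose Jordan canonical form consists, for each nonzero eigenvalue, of blocks J_p(λ) appearing with the same multiplicity as J_p(λω^k) for every k ∈ {0,...,h-1}, obtained via right eigenvector transformations x ↦ (blocks scaled by powers (ω^k)^{(i-j) mod h}) and left eigenvector transformations y ↦ (blocks scaled by (ω^k)^{(j-i) mod h}) with respect to a partition P = {V_1,...,V_h} of {1,...,n} (i.e., both conditions (i) and (ii) of the Jordan-chain hypothesis hold for all eigenvalues), then A is h-cyclic with partition P. -/

import Mathlib

open Matrix

/-- `A` is `h`-cyclic with respect to the partition of indices given by the block-index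
map `f` (vertex `x` lies in block `f x`): every nonzero entry goes from block `ℓ` to
block `ℓ + 1 (mod h)`. -/
def IsHCyclic {n h : ℕ} (A : Matrix (Fin n) (Fin n) ℂ) (f : Fin n → ZMod h) : Prop :=
  ∀ i j, A i j ≠ 0 → f j = f i + 1

/-- `ω = exp(2πi/h)`, a primitive `h`-th root of unity. -/
noncomputable def primRoot (h : ℕ) : ℂ := Complex.exp (2 * Real.pi * Complex.I / h)

/-- `x_0, …, x_{p-1}` is a right Jordan chain of `A` for the eigenvalue `lam`. -/
def IsRightChain {n : ℕ} (A : Matrix (Fin n) (Fin n) ℂ) (lam : ℂ) (p : ℕ)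
    (x : ℕ → Fin n → ℂ) : Prop :=
  x 0 ≠ 0 ∧ A *ᵥ x 0 = lam • x 0 ∧
    ∀ j, 0 < j → j < p → A *ᵥ x j = lam • x j + x (j - 1)

/-- `y_0, …, y_{p-1}` is a left Jordan chain of `A` for the eigenvalue `lam`. -/
def IsLeftChain {n : ℕ} (A : Matrix (Fin n) (Fin n) ℂ) (lam : ℂ) (p : ℕ)
    (y : ℕ → Fin n → ℂ) : Prop :=
  y 0 ≠ 0 ∧ y 0 ᵥ* A = lam • y 0 ∧
    ∀ j, 0 < j → j < p → y j ᵥ* A = lam • y j + y (j - 1)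

/-- Right scaling: `x̂_j` has block-`i` component `c^{(i-j) mod h} x_{ij}`. -/
noncomputable def rscale {n h : ℕ} (f : Fin n → ZMod h) (c : ℂ)
    (x : ℕ → Fin n → ℂ) : ℕ → Fin n → ℂ :=
  fun j y => c ^ (f y - (j : ZMod h)).val * x j y

/-- Left scaling: `ŷ_j` has block-`i` component `c^{(j-i) mod h} y_{ji}`. -/
noncomputable def lscale {n h : ℕ} (f : Fin n → ZMod h) (c : ℂ)
    (y : ℕ → Fin n → ℂ) : ℕ → Fin n → ℂ :=
  fun j i => c ^ ((j : ZMod h) - f i).val * y j i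

/-- If every right Jordan chain of `A` transforms, for every `k < h`, under the
`ω^k`-block-scaling into a right Jordan chain for `λω^k` (condition (i)), and likewise
every left Jordan chain (condition (ii)), then `A` is `h`-cyclic with partition `f`. -/
theorem hcyclic_of_chain_symmetry {n h : ℕ} [NeZero h] (A : Matrix (Fin n) (Fin n) ℂ)
    (f : Fin n → ZMod h)
    (hright : ∀ (lam : ℂ) (p : ℕ) (x : ℕ → Fin n → ℂ), IsRightChain A lam p x →
      ∀ k, k < h → IsRightChain A (lam * primRoot h ^ k) p (rscale f (primRoot h ^ k) x))
    (hleft : ∀ (lam : ℂ) (p : ℕ) (y : ℕ → Fin n → ℂ), IsLeftChain A lam p y →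
      ∀ k, k < h → IsLeftChain A (lam * primRoot h ^ k) p (lscale f (primRoot h ^ k) y)) :
    IsHCyclic A f := by
  have hpos : 0 < h := Nat.pos_of_ne_zero (NeZero.ne h)
  rcases eq_or_lt_of_le (Nat.one_le_iff_ne_zero.mpr (NeZero.ne h)) with h1 | h2
  · -- h = 1 : ZMod 1 is a subsingleton
    intro i j _
    subst h1
    exact Subsingleton.elim _ _
  set ζ : ℂ := primRoot h with hζdef
  have hζ : IsPrimitiveRoot ζ h := by
    rw [hζdef, primRoot]
    exact Complex.isPrimitiveRoot_exp h (NeZero.ne h)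
  have emod : ∀ a : ℕ, ζ ^ a = ζ ^ (a % h) := by
    intro a
    conv_lhs => rw [← Nat.div_add_mod a h]
    rw [pow_add, pow_mul, hζ.pow_eq_one, one_pow, one_mul]
  have zcongr : ∀ a b : ℕ, (a : ZMod h) = (b : ZMod h) → ζ ^ a = ζ ^ b := by
    intro a b hab
    rw [ZMod.natCast_eq_natCast_iff'] at hab
    rw [emod a, emod b, hab]
  have cval : ∀ a : ZMod h, ((a.val : ℕ) : ZMod h) = a := fun a => by
    rw [ZMod.natCast_val, ZMod.cast_id]
  -- the block-scaling map
  set g : (Fin n → ℂ) → (Fin n → ℂ) := fun v y => ζ ^ (f y).val * v y with hg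
  -- key commutation identity on generalized eigenvectors
  have main : ∀ (μ : ℂ) (q : ℕ) (v : Fin n → ℂ),
      (((Matrix.mulVecLin A) - μ • (1 : Module.End ℂ (Fin n → ℂ))) ^ q) v = 0 →
      A *ᵥ g v = ζ • g (A *ᵥ v) := by
    intro μ q
    induction q with
    | zero =>
      intro v hv
      simp only [pow_zero, Module.End.one_apply] at hv
      subst hv
      have : g 0 = 0 := by funext y; simp [hg]
      simp [this]
    | succ q ih =>
      intro v hv
      set N : Module.End ℂ (Fin n → ℂ) :=
        (Matrix.mulVecLin A) - μ • (1 : Module.End ℂ (Fin n → ℂ)) with hN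
      have hNapp : ∀ w : Fin n → ℂ, N w = A *ᵥ w - μ • w := by
        intro w
        simp [hN, Matrix.mulVecLin_apply]
      have hAN : ∀ w : Fin n → ℂ, A *ᵥ w = N w + μ • w := by
        intro w; rw [hNapp]; abel
      by_cases hq : (N ^ q) v = 0
      · exact ih v hq
      · -- build the Jordan chain
        set x : ℕ → Fin n → ℂ := fun j => (N ^ (q - j)) v with hx
        have hpowsucc : ∀ m : ℕ, (N ^ (m + 1)) v = N ((N ^ m) v) := by
          intro m; rw [pow_succ']; rfl
        have hchain : IsRightChain A μ (q + 1) x := by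
          refine ⟨by simpa [hx] using hq, ?_, ?_⟩
          · rw [hAN]
            have : N (x 0) = 0 := by
              rw [hx]; simp only [Nat.sub_zero]
              rw [← hpowsucc q]; exact hv
            rw [this, zero_add]
          · intro j hj0 hj
            have hjq : j ≤ q := Nat.lt_succ_iff.mp hj
            rw [hAN]
            have hNx : N (x j) = x (j - 1) := by
              have e : q - (j - 1) = (q - j) + 1 := by omega
              simp only [hx, e, hpowsucc]
            rw [hNx]; abel
        have hc := hright μ (q + 1) x hchain 1 h2
        simp only [pow_one] at hc
        -- scaling facts
        have scal : ∀ (m : ℕ) (w : Fin n → ℂ),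
            (fun y => ζ ^ ((m : ZMod h)).val * (ζ ^ ((f y - (m : ZMod h)).val) * w y)) = g w := by
          intro m w; funext y
          have key : ζ ^ ((m : ZMod h)).val * ζ ^ ((f y - (m : ZMod h)).val)
              = ζ ^ (f y).val := by
            rw [← pow_add]
            apply zcongr
            push_cast [cval]
            ring
          rw [← mul_assoc, key, hg]
        rcases Nat.eq_zero_or_pos q with hq0 | hqpos
        · -- q = 0 : v is an eigenvector
          subst hq0
          have heig := hc.2.1
          have hx0 : rscale f ζ x 0 = g v := by
            funext y
            simp only [rscale, Nat.cast_zero, sub_zero, hx, Nat.sub_zero, pow_zero,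
              Module.End.one_apply, hg]
          rw [hx0] at heig
          have hNv : N v = 0 := by
            have := hv; rwa [hpowsucc 0, pow_zero, Module.End.one_apply] at this
          have hAv : A *ᵥ v = μ • v := by rw [hAN, hNv, zero_add]
          rw [heig, hAv]
          have : g (μ • v) = μ • g v := by funext y; simp [hg]; ring
          rw [this, smul_smul, mul_comm]
        · -- q ≥ 1 : use the chain relation at j = q
          have hrel := hc.2.2 q hqpos (Nat.lt_succ_self q)
          -- multiply through by ζ ^ ((q : ZMod h)).val
          set c : ℂ := ζ ^ ((q : ZMod h)).val with hcdef
          have hmul : A *ᵥ (c • rscale f ζ x q)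
              = (μ * ζ) • (c • rscale f ζ x q) + c • rscale f ζ x (q - 1) := by
            rw [Matrix.mulVec_smul, hrel, smul_add, smul_comm]
          have hxq : x q = v := by
            rw [hx]; simp only [Nat.sub_self, pow_zero, Module.End.one_apply]
          have hcxq : c • rscale f ζ x q = g v := by
            rw [← hxq]
            funext y
            simpa [rscale, hcdef] using congrFun (scal q (x q)) y
          have hcx1 : c • rscale f ζ x (q - 1) = ζ • g (x (q - 1)) := by
            funext y
            have hcc : c = ζ * ζ ^ (((q - 1 : ℕ) : ZMod h)).val := by
              rw [hcdef]
              have : ζ ^ ((q : ZMod h)).val = ζ ^ ((((q - 1 : ℕ) : ZMod h)).val + 1) := by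
                apply zcongr
                push_cast [cval]
                have : ((q : ℕ) : ZMod h) = (((q - 1 : ℕ) : ZMod h)) + 1 := by
                  conv_lhs => rw [show q = (q - 1) + 1 by omega]
                  push_cast
                  ring
                rw [this]
              rw [this, pow_succ]
              ring
            have := congrFun (scal (q - 1) (x (q - 1))) y
            simp only [rscale, Pi.smul_apply, smul_eq_mul]
            rw [hcc]
            calc ζ * ζ ^ (((q - 1 : ℕ) : ZMod h)).val *
                  (ζ ^ ((f y - ((q - 1 : ℕ) : ZMod h)).val) * x (q - 1) y)
                = ζ * (ζ ^ (((q - 1 : ℕ) : ZMod h)).val *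
                  (ζ ^ ((f y - ((q - 1 : ℕ) : ZMod h)).val) * x (q - 1) y)) := by ring
              _ = ζ * g (x (q - 1)) y := by rw [this]
          rw [hcxq, hcx1] at hmul
          -- now compute the right-hand side of the goal
          have hxq1 : x (q - 1) = N v := by
            simp only [hx, show q - (q - 1) = 1 from by omega, pow_one]
          have hAv : A *ᵥ v = x (q - 1) + μ • v := by
            rw [hAN, hxq1]
          rw [hmul, hAv]
          have hgadd : ∀ u w : Fin n → ℂ, g (u + w) = g u + g w := by
            intro u w; funext y; simp [hg]; ring
          have hgsmul : ∀ (a : ℂ) (w : Fin n → ℂ), g (a • w) = a • g w := by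
            intro a w; funext y; simp [hg]; ring
          rw [hgadd, hgsmul]
          module
  -- extend to all vectors via the spanning of generalized eigenspaces
  have key : ∀ v : Fin n → ℂ, A *ᵥ g v = ζ • g (A *ᵥ v) := by
    intro v
    have hv : v ∈ ⨆ μ : ℂ, Module.End.maxGenEigenspace (Matrix.mulVecLin A) μ := by
      rw [Module.End.iSup_maxGenEigenspace_eq_top]
      trivial
    refine Submodule.iSup_induction (motive := fun v => A *ᵥ g v = ζ • g (A *ᵥ v)) _ hv
      (fun μ w hw => ?_) ?_ (fun u w hu hw => ?_)
    · rw [Module.End.mem_maxGenEigenspace] at hw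
      obtain ⟨q, hq⟩ := hw
      exact main μ q w hq
    · have : g 0 = 0 := by funext y; simp [hg]
      simp [this]
    · have hgadd : ∀ a b : Fin n → ℂ, g (a + b) = g a + g b := by
        intro a b; funext y; simp [hg]; ring
      show A *ᵥ g (u + w) = ζ • g (A *ᵥ (u + w))
      rw [hgadd, Matrix.mulVec_add, Matrix.mulVec_add, hgadd, smul_add, hu, hw]
  -- conclude entrywise
  intro i j hAij
  have hkey := congrFun (key (Pi.single j 1)) i
  have hgsingle : g (Pi.single j 1) = Pi.single j (ζ ^ (f j).val) := by
    funext y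
    by_cases hy : y = j
    · subst hy; simp [hg]
    · simp [hg, Pi.single_eq_of_ne hy]
  rw [hgsingle] at hkey
  simp only [Matrix.mulVec_single, Pi.smul_apply, hg, smul_eq_mul, mul_one, Matrix.col_apply, op_smul_eq_mul] at hkey
  -- hkey : A i j * ζ ^ (f j).val = ζ * (ζ ^ (f i).val * A i j)
  have hpw : ζ ^ (f j).val = ζ ^ ((f i).val + 1) := by
    have := hkey
    rw [pow_succ]
    field_simp at this ⊢
    calc ζ ^ (f j).val = ζ * (ζ ^ (f i).val * A i j) / A i j := by
          rw [this]; field_simp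
      _ = ζ * ζ ^ (f i).val := by field_simp
  have hmodeq : ((f j).val : ZMod h) = (((f i).val + 1 : ℕ) : ZMod h) := by
    rw [ZMod.natCast_eq_natCast_iff']
    refine hζ.pow_inj (Nat.mod_lt _ hpos) (Nat.mod_lt _ hpos) ?_
    rw [← emod, ← emod, hpw]
  rw [cval] at hmodeq
  push_cast [cval] at hmodeq
  exact hmodeq
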